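/- arXiv:0904.2759 — 2 statements merged into one kernel-verified Lean document; each statement's English description precedes it below -/
import Mathlib

section
/- Let V be a finite set, φ_v ∈ ℂ^V unit vectors for v ∈ V, T = ∑_{v} (e_v ⊗ φ_v)⟨e_v|, S the swap operator on ℂ^V ⊗ ℂ^V, and M = T† S T. Let α be a unit eigenvector of M with eigenvalue ρ. If |ρ| < 1, then the vectors |α,±⟩ = (I − (ρ ∓ i√(1 − ρ²)) S) T α satisfy ‖|α,±⟩‖ = √(2(1 − ρ²)), and for every ψ ∈ ℂ^V, |⟨T ψ, |α,±⟩⟩|² / ‖|α,±⟩‖² = (1/2) |⟨ψ, α⟩|². If |ρ| = 1, then ‖T α‖ = 1 and ⟨T ψ, T α⟩ = ⟨ψ, α⟩ for every ψ ∈ ℂ^V. -/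
open Matrix

noncomputable def specNorm {ι : Type} [Fintype ι] [DecidableEq ι] {𝕜 : Type} [RCLike 𝕜]
    (M : Matrix ι ι 𝕜) : ℝ :=
  ‖LinearMap.toContinuousLinearMap (Matrix.toEuclideanLin M)‖

/-- The standard Hermitian inner product `⟨x, y⟩ = ∑ i, conj (x i) * y i`. -/
noncomputable def dotc {ι : Type} [Fintype ι] (x y : ι → ℂ) : ℂ :=
  ∑ i, starRingEnd ℂ (x i) * y i

/-- Squared Euclidean norm. -/
noncomputable def norm2 {ι : Type} [Fintype ι] (x : ι → ℂ) : ℝ := ∑ i, ‖x i‖ ^ 2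

section Szegedy

variable {V : Type} [Fintype V] [DecidableEq V]

/-- The isometry `T = ∑_v (e_v ⊗ φ_v)⟨e_v|`, identifying `ℂ^V ⊗ ℂ^V` with `ℂ^(V × V)`. -/
def szT (φ : V → V → ℂ) : Matrix (V × V) V ℂ :=
  Matrix.of fun p v => if p.1 = v then φ v p.2 else 0

/-- The swap operator `S` on `ℂ^V ⊗ ℂ^V ≅ ℂ^(V × V)`. -/
def szS (V : Type) [Fintype V] [DecidableEq V] : Matrix (V × V) (V × V) ℂ :=
  Matrix.of fun p q => if p.1 = q.2 ∧ p.2 = q.1 then 1 else 0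

/-- The quantum walk unitary `U = (2 T T† − I) S`. -/
noncomputable def szU (φ : V → V → ℂ) : Matrix (V × V) (V × V) ℂ :=
  ((2 : ℂ) • (szT φ * (szT φ)ᴴ) - 1) * szS V

/-- The discriminant matrix `M = T† S T`. -/
noncomputable def szM (φ : V → V → ℂ) : Matrix V V ℂ :=
  (szT φ)ᴴ * szS V * szT φ

/-- The candidate eigenvector `|α,+⟩ = (I − (ρ − i√(1−ρ²)) S) Tα`. -/
noncomputable def szVecPlus (φ : V → V → ℂ) (α : V → ℂ) (ρ : ℝ) : V × V → ℂ :=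
  (szT φ).mulVec α -
    ((ρ : ℂ) - Complex.I * (Real.sqrt (1 - ρ ^ 2) : ℂ)) • (szS V).mulVec ((szT φ).mulVec α)

/-- The candidate eigenvector `|α,−⟩ = (I − (ρ + i√(1−ρ²)) S) Tα`. -/
noncomputable def szVecMinus (φ : V → V → ℂ) (α : V → ℂ) (ρ : ℝ) : V × V → ℂ :=
  (szT φ).mulVec α -
    ((ρ : ℂ) + Complex.I * (Real.sqrt (1 - ρ ^ 2) : ℂ)) • (szS V).mulVec ((szT φ).mulVec α)

end Szegedy

section SzAux

lemma szAux_dotc_eq {ι : Type} [Fintype ι] (x y : ι → ℂ) : dotc x y = star x ⬝ᵥ y := rfl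

lemma szAux_conj_mul_self (z : ℂ) : starRingEnd ℂ z * z = ((‖z‖^2 : ℝ) : ℂ) := by
  rw [Complex.sq_norm, Complex.normSq_eq_conj_mul_self]

lemma szAux_dotc_sub_left {ι : Type} [Fintype ι] (x y z : ι → ℂ) :
    dotc (x - y) z = dotc x z - dotc y z := by
  simp [dotc, sub_mul, Finset.sum_sub_distrib]

lemma szAux_dotc_sub_right {ι : Type} [Fintype ι] (x y z : ι → ℂ) :
    dotc x (y - z) = dotc x y - dotc x z := by
  simp [dotc, mul_sub, Finset.sum_sub_distrib]

lemma szAux_dotc_smul_left {ι : Type} [Fintype ι] (c : ℂ) (x y : ι → ℂ) :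
    dotc (c • x) y = starRingEnd ℂ c * dotc x y := by
  simp [dotc, Finset.mul_sum, mul_assoc]

lemma szAux_dotc_smul_right {ι : Type} [Fintype ι] (c : ℂ) (x y : ι → ℂ) :
    dotc x (c • y) = c * dotc x y := by
  simp [dotc, Finset.mul_sum, mul_left_comm]

lemma szAux_dotc_conj {ι : Type} [Fintype ι] (x y : ι → ℂ) :
    dotc x y = starRingEnd ℂ (dotc y x) := by
  simp [dotc, map_sum, _root_.map_mul, mul_comm]

lemma szAux_norm2_eq {ι : Type} [Fintype ι] (x : ι → ℂ) :
    ((norm2 x : ℝ) : ℂ) = dotc x x := by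
  unfold norm2 dotc
  push_cast
  exact Finset.sum_congr rfl fun i _ => by rw [szAux_conj_mul_self]; push_cast; ring

lemma szAux_dotc_mulVec_right {m n : Type} [Fintype m] [Fintype n] (A : Matrix m n ℂ)
    (x : m → ℂ) (y : n → ℂ) : dotc x (A.mulVec y) = dotc (Aᴴ.mulVec x) y := by
  rw [szAux_dotc_eq, szAux_dotc_eq, Matrix.star_mulVec, Matrix.conjTranspose_conjTranspose,
    Matrix.dotProduct_mulVec]

lemma szAux_dotc_mulVec_left {m n : Type} [Fintype m] [Fintype n] (A : Matrix m n ℂ)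
    (x : n → ℂ) (y : m → ℂ) : dotc (A.mulVec x) y = dotc x (Aᴴ.mulVec y) := by
  rw [szAux_dotc_mulVec_right, Matrix.conjTranspose_conjTranspose]

variable {V : Type} [Fintype V] [DecidableEq V]

lemma szAux_TT (φ : V → V → ℂ) (hφ : ∀ v, ∑ w, ‖φ v w‖ ^ 2 = 1) :
    (szT φ)ᴴ * szT φ = 1 := by
  ext u v
  simp only [Matrix.mul_apply, Matrix.conjTranspose_apply, szT, Matrix.of_apply,
    Fintype.sum_prod_type, RCLike.star_def]
  rw [Finset.sum_eq_single u]
  · by_cases h : u = v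
    · subst h
      simp only [if_pos rfl, Matrix.one_apply_eq]
      rw [← Complex.ofReal_one, ← hφ u]
      push_cast
      refine Finset.sum_congr rfl fun w _ => ?_
      rw [szAux_conj_mul_self]; push_cast; ring
    · simp [h, Matrix.one_apply_ne h]
  · intro a _ ha
    apply Finset.sum_eq_zero; intro b _; simp [ha]
  · simp

lemma szAux_SH : (szS V)ᴴ = szS V := by
  ext ⟨a,b⟩ ⟨c,d⟩
  simp only [szS, Matrix.conjTranspose_apply, Matrix.of_apply]
  by_cases h : c = b ∧ d = a
  · obtain ⟨rfl, rfl⟩ := h; simp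
  · rw [if_neg h, if_neg]
    · simp
    · rintro ⟨rfl, rfl⟩; exact h ⟨rfl, rfl⟩

lemma szAux_S2 : szS V * szS V = 1 := by
  ext p q
  rw [Matrix.mul_apply, Finset.sum_eq_single (p.2, p.1)]
  · simp [szS, Matrix.one_apply, Prod.ext_iff, and_comm]
  · intro r _ hr
    simp only [szS, Matrix.of_apply]
    rw [if_neg, zero_mul]
    rintro ⟨h1, h2⟩
    exact hr (Prod.ext h2.symm h1.symm)
  · simp

lemma szAux_isom (φ : V → V → ℂ) (hφ : ∀ v, ∑ w, ‖φ v w‖ ^ 2 = 1) (x y : V → ℂ) :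
    dotc ((szT φ).mulVec x) ((szT φ).mulVec y) = dotc x y := by
  rw [szAux_dotc_mulVec_left, Matrix.mulVec_mulVec, szAux_TT φ hφ, Matrix.one_mulVec]

lemma szAux_Sisom (x y : V × V → ℂ) :
    dotc ((szS V).mulVec x) ((szS V).mulVec y) = dotc x y := by
  rw [szAux_dotc_mulVec_left, Matrix.mulVec_mulVec, szAux_SH, szAux_S2, Matrix.one_mulVec]

lemma szAux_cross (φ : V → V → ℂ) (α : V → ℂ) (ρ : ℝ)
    (heig : (szM φ).mulVec α = (ρ : ℂ) • α) (ψ : V → ℂ) :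
    dotc ((szT φ).mulVec ψ) ((szS V).mulVec ((szT φ).mulVec α)) = ρ * dotc ψ α := by
  rw [szAux_dotc_mulVec_left, Matrix.mulVec_mulVec, Matrix.mulVec_mulVec]
  show dotc ψ ((szM φ).mulVec α) = _
  rw [heig, szAux_dotc_smul_right]

end SzAux

/-- Normalization of the Szegedy eigenvectors: if `α` is a unit eigenvector
of `M = T†ST` with real eigenvalue `ρ` and `|ρ| < 1`, then `‖|α,±⟩‖² = 2(1 − ρ²)` and for every
`ψ ∈ ℂ^V`, `|⟨Tψ, |α,±⟩⟩|² / ‖|α,±⟩‖² = ½ |⟨ψ, α⟩|²`; if `|ρ| = 1` then `‖Tα‖ = 1` and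
`⟨Tψ, Tα⟩ = ⟨ψ, α⟩` for every `ψ`. -/
theorem szegedy_eigenvector_normalization
    {V : Type} [Fintype V] [DecidableEq V]
    (φ : V → V → ℂ) (hφ : ∀ v, ∑ w, ‖φ v w‖ ^ 2 = 1)
    (α : V → ℂ) (ρ : ℝ)
    (heig : (szM φ).mulVec α = (ρ : ℂ) • α) (hunit : dotc α α = 1) :
    (|ρ| < 1 →
      norm2 (szVecPlus φ α ρ) = 2 * (1 - ρ ^ 2) ∧
      norm2 (szVecMinus φ α ρ) = 2 * (1 - ρ ^ 2) ∧
      ∀ ψ : V → ℂ,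
        ‖dotc ((szT φ).mulVec ψ) (szVecPlus φ α ρ)‖ ^ 2 / norm2 (szVecPlus φ α ρ)
            = (1 / 2) * ‖dotc ψ α‖ ^ 2 ∧
        ‖dotc ((szT φ).mulVec ψ) (szVecMinus φ α ρ)‖ ^ 2 / norm2 (szVecMinus φ α ρ)
            = (1 / 2) * ‖dotc ψ α‖ ^ 2) ∧
    (|ρ| = 1 →
      norm2 ((szT φ).mulVec α) = 1 ∧
      ∀ ψ : V → ℂ, dotc ((szT φ).mulVec ψ) ((szT φ).mulVec α) = dotc ψ α) := by
  have h1 : dotc ((szT φ).mulVec α) ((szT φ).mulVec α) = 1 := by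
    rw [szAux_isom φ hφ, hunit]
  have hcross := szAux_cross φ α ρ heig
  have hww : dotc ((szS V).mulVec ((szT φ).mulVec α)) ((szS V).mulVec ((szT φ).mulVec α)) = 1 := by
    rw [szAux_Sisom, h1]
  have huw : dotc ((szT φ).mulVec α) ((szS V).mulVec ((szT φ).mulVec α)) = (ρ : ℂ) := by
    rw [hcross α, hunit, mul_one]
  have hwu : dotc ((szS V).mulVec ((szT φ).mulVec α)) ((szT φ).mulVec α) = (ρ : ℂ) := by
    rw [szAux_dotc_conj, huw, Complex.conj_ofReal]
  have expand : ∀ c : ℂ,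
      dotc ((szT φ).mulVec α - c • (szS V).mulVec ((szT φ).mulVec α))
           ((szT φ).mulVec α - c • (szS V).mulVec ((szT φ).mulVec α))
      = 1 - starRingEnd ℂ c * ρ - c * ρ + c * starRingEnd ℂ c := by
    intro c
    simp only [szAux_dotc_sub_right, szAux_dotc_sub_left, szAux_dotc_smul_right,
      szAux_dotc_smul_left, h1, huw, hwu, hww]
    ring
  have expandψ : ∀ (ψ : V → ℂ) (c : ℂ),
      dotc ((szT φ).mulVec ψ)
        ((szT φ).mulVec α - c • (szS V).mulVec ((szT φ).mulVec α))
      = (1 - c * ρ) * dotc ψ α := by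
    intro ψ c
    rw [szAux_dotc_sub_right, szAux_dotc_smul_right, hcross ψ, szAux_isom φ hφ ψ α]
    ring
  constructor
  · intro hlt
    have h2 : (0:ℝ) < 1 - ρ^2 := by nlinarith [abs_lt.mp hlt, abs_nonneg ρ, sq_abs ρ]
    have hs : Real.sqrt (1 - ρ^2) * Real.sqrt (1 - ρ^2) = 1 - ρ^2 :=
      Real.mul_self_sqrt h2.le
    have hsC : ((Real.sqrt (1 - ρ^2) : ℝ) : ℂ) * ((Real.sqrt (1 - ρ^2) : ℝ) : ℂ)
        = 1 - (ρ:ℂ)^2 := by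
      rw [← Complex.ofReal_mul, hs]; push_cast; ring
    set cp : ℂ := (ρ : ℂ) - Complex.I * (Real.sqrt (1 - ρ ^ 2) : ℂ) with hcp
    set cm : ℂ := (ρ : ℂ) + Complex.I * (Real.sqrt (1 - ρ ^ 2) : ℂ) with hcm
    have hconjp : starRingEnd ℂ cp = cm := by
      rw [hcp, hcm]
      simp [map_sub, _root_.map_mul, Complex.conj_ofReal, Complex.conj_I]
      try ring
    have hconjm : starRingEnd ℂ cm = cp := by
      rw [hcp, hcm]
      simp [map_add, _root_.map_mul, Complex.conj_ofReal, Complex.conj_I]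
      try ring
    have hdp : dotc (szVecPlus φ α ρ) (szVecPlus φ α ρ) = ((2*(1-ρ^2) : ℝ) : ℂ) := by
      rw [szVecPlus, expand cp, hconjp, hcp, hcm]
      push_cast
      linear_combination (-(Complex.I^2)) * hsC - (1-(ρ:ℂ)^2) * Complex.I_sq
    have hdm : dotc (szVecMinus φ α ρ) (szVecMinus φ α ρ) = ((2*(1-ρ^2) : ℝ) : ℂ) := by
      rw [szVecMinus, expand cm, hconjm, hcp, hcm]
      push_cast
      linear_combination (-(Complex.I^2)) * hsC - (1-(ρ:ℂ)^2) * Complex.I_sq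
    have hnp : norm2 (szVecPlus φ α ρ) = 2 * (1 - ρ^2) := by
      have := szAux_norm2_eq (szVecPlus φ α ρ)
      rw [hdp] at this
      exact_mod_cast this
    have hnm : norm2 (szVecMinus φ α ρ) = 2 * (1 - ρ^2) := by
      have := szAux_norm2_eq (szVecMinus φ α ρ)
      rw [hdm] at this
      exact_mod_cast this
    refine ⟨hnp, hnm, fun ψ => ?_⟩
    have hne : (2 : ℝ) * (1 - ρ^2) ≠ 0 := by positivity
    have hcp2 : ‖(1:ℂ) - cp * ρ‖^2 = 1 - ρ^2 := by
      have he : (1:ℂ) - cp * ρ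
          = Complex.ofReal (1-ρ^2) + Complex.ofReal (Real.sqrt (1-ρ^2) * ρ) * Complex.I := by
        rw [hcp]; push_cast; ring
      rw [he, Complex.sq_norm, Complex.normSq_add_mul_I]
      nlinarith [hs]
    have hcm2 : ‖(1:ℂ) - cm * ρ‖^2 = 1 - ρ^2 := by
      have he : (1:ℂ) - cm * ρ
          = Complex.ofReal (1-ρ^2) + Complex.ofReal (-(Real.sqrt (1-ρ^2) * ρ)) * Complex.I := by
        rw [hcm]; push_cast; ring
      rw [he, Complex.sq_norm, Complex.normSq_add_mul_I]
      nlinarith [hs]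
    constructor
    · rw [hnp, show szVecPlus φ α ρ = (szT φ).mulVec α - cp • (szS V).mulVec ((szT φ).mulVec α)
        from rfl, expandψ ψ cp, norm_mul, mul_pow, hcp2, div_eq_iff hne]
      ring
    · rw [hnm, show szVecMinus φ α ρ = (szT φ).mulVec α - cm • (szS V).mulVec ((szT φ).mulVec α)
        from rfl, expandψ ψ cm, norm_mul, mul_pow, hcm2, div_eq_iff hne]
      ring
  · intro _
    refine ⟨?_, fun ψ => szAux_isom φ hφ ψ α⟩
    have := szAux_norm2_eq ((szT φ).mulVec α)
    rw [h1] at this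
    exact_mod_cast this
end

section
/- For every span program P on n boolean variables there exists a real span program P' on n boolean variables — i.e., one for which, in some orthonormal basis of its inner product space, all coordinates of the target vector and of every input vector are real — such that f_{P'}(x) = f_P(x) and wsize_s(P', x) ≤ wsize_s(P, x) for every x ∈ {0,1}^n and every cost vector s ∈ [0,∞)^n. -/
open scoped ComplexInnerProductSpace

/-- A span program on `n` boolean variables: an inner product space `ℂ^d`, a target vector,
and input vectors indexed by `Fin m`, each either free (`label i = none`) or labeled by a
pair `(j, b)` (`label i = some (j, b)`, meaning `i ∈ I_{j,b}`). -/
structure SpanProgram (n : ℕ) : Type where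
  d : ℕ
  m : ℕ
  label : Fin m → Option (Fin n × Bool)
  target : EuclideanSpace ℂ (Fin d)
  input : Fin m → EuclideanSpace ℂ (Fin d)

namespace SpanProgram

variable {n : ℕ}

/-- Input vector `i` is available on input `x`: it is free, or labeled `(j, x_j)` for some `j`. -/
def avail (P : SpanProgram n) (x : Fin n → Bool) (i : Fin P.m) : Prop :=
  P.label i = none ∨ ∃ j : Fin n, P.label i = some (j, x j)

instance (P : SpanProgram n) (x : Fin n → Bool) (i : Fin P.m) : Decidable (P.avail x i) :=
  inferInstanceAs (Decidable (P.label i = none ∨ ∃ j : Fin n, P.label i = some (j, x j)))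

/-- The boolean function computed by `P`:  `f_P(x) = 1` iff the target is in the range of
`A ∘ Π(x)`, i.e. the target is a linear combination of the available input vectors. -/
def eval (P : SpanProgram n) (x : Fin n → Bool) : Prop :=
  ∃ w : Fin P.m → ℂ, ∑ i, (if P.avail x i then w i else 0) • P.input i = P.target

/-- The squared cost weight of coordinate `i`:  `s j` if `i ∈ I_{j,b}`, and `0` if `i` is free.
Thus `‖S w‖² = ∑ i, P.cw s i * ‖w i‖²`. -/
def cw (P : SpanProgram n) (s : Fin n → ℝ) (i : Fin P.m) : ℝ :=
  match P.label i with
  | none => 0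
  | some jb => s jb.1

open Classical in
/-- The witness size of `P` on input `x` with costs `s`. -/
noncomputable def wsizex (P : SpanProgram n) (s : Fin n → ℝ) (x : Fin n → Bool) : ℝ :=
  if P.eval x then
    sInf { r : ℝ | ∃ w : Fin P.m → ℂ,
      (∑ i, (if P.avail x i then w i else 0) • P.input i = P.target) ∧
      r = ∑ i, P.cw s i * ‖w i‖ ^ 2 }
  else
    sInf { r : ℝ | ∃ w' : EuclideanSpace ℂ (Fin P.d), ⟪P.target, w'⟫ = 1 ∧
      (∀ i, P.avail x i → ⟪P.input i, w'⟫ = 0) ∧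
      r = ∑ i, P.cw s i * ‖⟪P.input i, w'⟫‖ ^ 2 }

/-- The witness size of `P` with costs `s`, restricted to the domain `D`:
`max_{x ∈ D} wsize_s(P, x)`. -/
noncomputable def wsizeD (P : SpanProgram n) (s : Fin n → ℝ) (D : Set (Fin n → Bool)) : ℝ :=
  sSup { r : ℝ | ∃ x ∈ D, r = P.wsizex s x }

end SpanProgram

/-- A span program is real if, in some orthonormal basis of its inner product space, all
coordinates of the target vector and of every input vector are real. -/
def SpanProgram.IsReal {n : ℕ} (P : SpanProgram n) : Prop :=
  ∃ b : OrthonormalBasis (Fin P.d) ℂ (EuclideanSpace ℂ (Fin P.d)),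
    (∀ k, (b.repr P.target k).im = 0) ∧ ∀ i k, (b.repr (P.input i) k).im = 0

section AuxReal

lemma euc_sum_apply {ι κ : Type*} (s : Finset ι) (f : ι → EuclideanSpace ℂ κ) (k : κ) :
    (∑ i ∈ s, f i) k = ∑ i ∈ s, f i k := by
  classical
  induction s using Finset.induction_on with
  | empty => simp [PiLp.zero_apply]
  | insert a s h ih => simp [Finset.sum_insert h, PiLp.add_apply, ih]

lemma complex_norm_sq (z : ℂ) : ‖z‖ ^ 2 = z.re ^ 2 + z.im ^ 2 := by
  rw [Complex.sq_norm, Complex.normSq_apply]; ring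

noncomputable def rho {d : ℕ} (v : EuclideanSpace ℂ (Fin d)) : EuclideanSpace ℂ (Fin (d + d)) :=
  WithLp.toLp 2 (Fin.addCases (motive := fun _ => ℂ) (fun k => ((v k).re : ℂ)) (fun k => ((v k).im : ℂ)))

@[simp] lemma rho_castAdd {d : ℕ} (v : EuclideanSpace ℂ (Fin d)) (k : Fin d) :
    rho v (Fin.castAdd d k) = ((v k).re : ℂ) := by simp [rho]

@[simp] lemma rho_natAdd {d : ℕ} (v : EuclideanSpace ℂ (Fin d)) (k : Fin d) :
    rho v (Fin.natAdd d k) = ((v k).im : ℂ) := by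
  show Fin.addCases (motive := fun _ => ℂ) (fun k => ((v k).re : ℂ)) (fun k => ((v k).im : ℂ))
    (Fin.natAdd d k) = _
  exact Fin.addCases_right k

lemma rho_im_eq_zero {d : ℕ} (v : EuclideanSpace ℂ (Fin d)) (k : Fin (d + d)) :
    (rho v k).im = 0 := by
  induction k using Fin.addCases with
  | left k => simp
  | right k => simp

lemma inner_rho_rho {d : ℕ} (v w : EuclideanSpace ℂ (Fin d)) :
    ⟪rho v, rho w⟫ = ((⟪v, w⟫ : ℂ).re : ℂ) := by
  simp only [PiLp.inner_apply, RCLike.inner_apply]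
  rw [Fin.sum_univ_add]
  simp only [rho_castAdd, rho_natAdd, Complex.re_sum]
  push_cast
  rw [← Finset.sum_add_distrib]
  congr 1; funext k
  simp [Complex.mul_re, Complex.conj_re, Complex.conj_im]

lemma inner_rho_I_rho {d : ℕ} (v w : EuclideanSpace ℂ (Fin d)) :
    ⟪rho (Complex.I • v), rho w⟫ = ((⟪v, w⟫ : ℂ).im : ℂ) := by
  rw [inner_rho_rho, inner_smul_left]
  simp

lemma rho_sum_decomp {d m : ℕ} (c : Fin m → ℂ) (v : Fin m → EuclideanSpace ℂ (Fin d)) :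
    (∑ i, ((c i).re : ℂ) • rho (v i)) + ∑ i, ((c i).im : ℂ) • rho (Complex.I • v i)
      = rho (∑ i, c i • v i) := by
  ext k
  induction k using Fin.addCases with
  | left k =>
    simp only [PiLp.add_apply, euc_sum_apply, PiLp.smul_apply, rho_castAdd, smul_eq_mul,
      Complex.re_sum]
    push_cast
    rw [← Finset.sum_add_distrib]
    congr 1; funext i
    simp [Complex.mul_re]
    ring
  | right k =>
    simp only [PiLp.add_apply, euc_sum_apply, PiLp.smul_apply, rho_natAdd, smul_eq_mul,
      Complex.im_sum]
    push_cast
    rw [← Finset.sum_add_distrib]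
    congr 1; funext i
    simp [Complex.mul_im]

noncomputable def sigma' {d : ℕ} (u : EuclideanSpace ℂ (Fin (d + d))) :
    EuclideanSpace ℂ (Fin d) :=
  WithLp.toLp 2 (fun k => ((u (Fin.castAdd d k)).re : ℂ) + ((u (Fin.natAdd d k)).re : ℂ) * Complex.I)

lemma sigma'_add {d : ℕ} (u u' : EuclideanSpace ℂ (Fin (d + d))) :
    sigma' (u + u') = sigma' u + sigma' u' := by
  ext k
  have h1 : ∀ (a b : EuclideanSpace ℂ (Fin (d + d))) (j : Fin (d + d)), (a + b) j = a j + b j :=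
    fun _ _ _ => rfl
  have h2 : ∀ (a b : EuclideanSpace ℂ (Fin d)) (j : Fin d), (a + b) j = a j + b j :=
    fun _ _ _ => rfl
  simp [sigma', h1, h2]
  ring

lemma sigma'_sum {d : ℕ} {ι : Type*} (s : Finset ι) (f : ι → EuclideanSpace ℂ (Fin (d + d))) :
    sigma' (∑ i ∈ s, f i) = ∑ i ∈ s, sigma' (f i) := by
  classical
  induction s using Finset.induction_on with
  | empty => ext k; simp [sigma', PiLp.zero_apply]
  | insert a s h ih => rw [Finset.sum_insert h, Finset.sum_insert h, ← ih, sigma'_add]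

lemma sigma'_rho {d : ℕ} (v : EuclideanSpace ℂ (Fin d)) : sigma' (rho v) = v := by
  ext k; simp [sigma', Complex.re_add_im]

lemma sigma'_smul_rho {d : ℕ} (a : ℂ) (v : EuclideanSpace ℂ (Fin d)) :
    sigma' (a • rho v) = ((a.re : ℂ)) • v := by
  ext k
  simp only [sigma', PiLp.toLp_apply, PiLp.smul_apply, smul_eq_mul, rho_castAdd, rho_natAdd]
  simp [Complex.ext_iff, Complex.mul_re, Complex.mul_im]

end AuxReal

section Realize
variable {n : ℕ}

/-- The real doubling of a span program. -/
noncomputable def SpanProgram.realize (P : SpanProgram n) : SpanProgram n where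
  d := P.d + P.d
  m := P.m + P.m
  label := Fin.addCases P.label P.label
  target := rho P.target
  input := Fin.addCases (fun i => rho (P.input i)) (fun i => rho (Complex.I • P.input i))

noncomputable instance (P : SpanProgram n) (x : Fin n → Bool) (i : Fin (P.m + P.m)) :
    Decidable (P.realize.avail x i) :=
  SpanProgram.instDecidableAvail P.realize x i

namespace SpanProgram

lemma realize_label_cast (P : SpanProgram n) (i : Fin P.m) :
    P.realize.label (Fin.castAdd P.m i) = P.label i := by
  simp only [SpanProgram.realize]
  exact Fin.addCases_left i

lemma realize_label_nat (P : SpanProgram n) (i : Fin P.m) :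
    P.realize.label (Fin.natAdd P.m i) = P.label i := by
  simp only [SpanProgram.realize]
  exact Fin.addCases_right i

lemma realize_input_cast (P : SpanProgram n) (i : Fin P.m) :
    P.realize.input (Fin.castAdd P.m i) = rho (P.input i) := by
  simp only [SpanProgram.realize]
  exact Fin.addCases_left i

lemma realize_input_nat (P : SpanProgram n) (i : Fin P.m) :
    P.realize.input (Fin.natAdd P.m i) = rho (Complex.I • P.input i) := by
  simp only [SpanProgram.realize]
  exact Fin.addCases_right i

lemma realize_avail_cast (P : SpanProgram n) (x : Fin n → Bool) (i : Fin P.m) :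
    P.realize.avail x (Fin.castAdd P.m i) ↔ P.avail x i := by
  unfold SpanProgram.avail; rw [realize_label_cast]

lemma realize_avail_nat (P : SpanProgram n) (x : Fin n → Bool) (i : Fin P.m) :
    P.realize.avail x (Fin.natAdd P.m i) ↔ P.avail x i := by
  unfold SpanProgram.avail; rw [realize_label_nat]

lemma realize_cw_cast (P : SpanProgram n) (s : Fin n → ℝ) (i : Fin P.m) :
    P.realize.cw s (Fin.castAdd P.m i) = P.cw s i := by
  unfold SpanProgram.cw; rw [realize_label_cast]

lemma realize_cw_nat (P : SpanProgram n) (s : Fin n → ℝ) (i : Fin P.m) :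
    P.realize.cw s (Fin.natAdd P.m i) = P.cw s i := by
  unfold SpanProgram.cw; rw [realize_label_nat]

lemma cw_nonneg (P : SpanProgram n) {s : Fin n → ℝ} (hs : ∀ j, 0 ≤ s j) (i : Fin P.m) :
    0 ≤ P.cw s i := by
  unfold SpanProgram.cw
  cases P.label i with
  | none => exact le_refl 0
  | some jb => exact hs jb.1


lemma realize_isReal (P : SpanProgram n) : P.realize.IsReal := by
  refine ⟨EuclideanSpace.basisFun _ ℂ, fun k => ?_, fun i k => ?_⟩
  · rw [EuclideanSpace.basisFun_repr]
    exact rho_im_eq_zero _ k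
  · rw [EuclideanSpace.basisFun_repr]
    induction i using Fin.addCases with
    | left i => rw [realize_input_cast]; exact rho_im_eq_zero _ k
    | right i => rw [realize_input_nat]; exact rho_im_eq_zero _ k

end SpanProgram
end Realize

namespace SpanProgram
variable {n : ℕ}

lemma realize_eval_iff (P : SpanProgram n) (x : Fin n → Bool) :
    P.realize.eval x ↔ P.eval x := by
  constructor
  · rintro ⟨W, hW⟩
    have hW2 : (∑ i : Fin (P.m + P.m),
        (if P.realize.avail x i then W i else 0) • P.realize.input i) = rho P.target := hW
    rw [Fin.sum_univ_add] at hW2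
    simp only [realize_input_cast, realize_input_nat, realize_avail_cast,
      realize_avail_nat] at hW2
    have hs := congrArg sigma' hW2
    erw [sigma'_add, sigma'_sum, sigma'_sum, sigma'_rho] at hs
    erw [Finset.sum_congr rfl (fun (i : Fin P.m) _ => sigma'_smul_rho
        (if P.avail x i then W (Fin.castAdd P.m i) else 0) (P.input i)),
      Finset.sum_congr rfl (fun (i : Fin P.m) _ => sigma'_smul_rho
        (if P.avail x i then W (Fin.natAdd P.m i) else 0) (Complex.I • P.input i))] at hs
    refine ⟨fun i => (((if P.avail x i then W (Fin.castAdd P.m i) else 0).re : ℂ))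
      + (((if P.avail x i then W (Fin.natAdd P.m i) else 0).re : ℂ)) * Complex.I, ?_⟩
    have key : ∀ i : Fin P.m,
        (if P.avail x i then (((if P.avail x i then W (Fin.castAdd P.m i) else 0).re : ℂ))
            + (((if P.avail x i then W (Fin.natAdd P.m i) else 0).re : ℂ)) * Complex.I else 0)
          = (((if P.avail x i then W (Fin.castAdd P.m i) else 0).re : ℂ))
            + (((if P.avail x i then W (Fin.natAdd P.m i) else 0).re : ℂ)) * Complex.I := by
      intro i
      by_cases h : P.avail x i <;> simp [h]
    calc ∑ i, (if P.avail x i then (((if P.avail x i then W (Fin.castAdd P.m i) else 0).re : ℂ))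
            + (((if P.avail x i then W (Fin.natAdd P.m i) else 0).re : ℂ)) * Complex.I else 0)
            • P.input i
        = ∑ i, ((((if P.avail x i then W (Fin.castAdd P.m i) else 0).re : ℂ))
            + (((if P.avail x i then W (Fin.natAdd P.m i) else 0).re : ℂ)) * Complex.I)
            • P.input i :=
          Finset.sum_congr rfl fun i _ => by rw [key i]
      _ = (∑ i, (((if P.avail x i then W (Fin.castAdd P.m i) else 0).re : ℂ)) • P.input i)
            + ∑ i, (((if P.avail x i then W (Fin.natAdd P.m i) else 0).re : ℂ))
              • (Complex.I • P.input i) := by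
          rw [← Finset.sum_add_distrib]
          exact Finset.sum_congr rfl fun i _ => by rw [add_smul, mul_smul]
      _ = P.target := hs
  · rintro ⟨w, hw⟩
    classical
    refine ⟨Fin.addCases (fun i => (((if P.avail x i then w i else 0) : ℂ).re : ℂ))
      (fun i => (((if P.avail x i then w i else 0) : ℂ).im : ℂ)), ?_⟩
    have main : (∑ i : Fin (P.m + P.m),
        (if P.realize.avail x i then
          (Fin.addCases (fun i => (((if P.avail x i then w i else 0) : ℂ).re : ℂ))
            (fun i => (((if P.avail x i then w i else 0) : ℂ).im : ℂ)) i : ℂ) else 0)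
          • P.realize.input i) = rho P.target := by
      rw [Fin.sum_univ_add]
      simp only [Fin.addCases_left, Fin.addCases_right, realize_input_cast, realize_input_nat,
        realize_avail_cast, realize_avail_nat]
      have h1 : ∀ i : Fin P.m,
          (if P.avail x i then (((if P.avail x i then w i else 0) : ℂ).re : ℂ) else 0)
            = (((if P.avail x i then w i else 0) : ℂ).re : ℂ) := by
        intro i; by_cases h : P.avail x i <;> simp [h]
      have h2 : ∀ i : Fin P.m,
          (if P.avail x i then (((if P.avail x i then w i else 0) : ℂ).im : ℂ) else 0)
            = (((if P.avail x i then w i else 0) : ℂ).im : ℂ) := by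
        intro i; by_cases h : P.avail x i <;> simp [h]
      calc (∑ i, (if P.avail x i then (((if P.avail x i then w i else 0) : ℂ).re : ℂ) else 0)
              • rho (P.input i))
            + ∑ i, (if P.avail x i then (((if P.avail x i then w i else 0) : ℂ).im : ℂ) else 0)
              • rho (Complex.I • P.input i)
          = (∑ i, (((if P.avail x i then w i else 0) : ℂ).re : ℂ) • rho (P.input i))
            + ∑ i, (((if P.avail x i then w i else 0) : ℂ).im : ℂ)
              • rho (Complex.I • P.input i) := by
            exact congrArg₂ (· + ·)
              (Finset.sum_congr rfl fun i _ => by rw [h1 i])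
              (Finset.sum_congr rfl fun i _ => by rw [h2 i])
        _ = rho (∑ i, (if P.avail x i then w i else 0) • P.input i) :=
            rho_sum_decomp _ _
        _ = rho P.target := by rw [hw]
    exact main

end SpanProgram

namespace SpanProgram

lemma exists_neg_witness {n : ℕ} (P : SpanProgram n) (x : Fin n → Bool) (h : ¬ P.eval x) :
    ∃ w' : EuclideanSpace ℂ (Fin P.d), ⟪P.target, w'⟫ = 1 ∧
      ∀ i, P.avail x i → ⟪P.input i, w'⟫ = 0 := by
  classical
  set g : {i : Fin P.m // P.avail x i} → EuclideanSpace ℂ (Fin P.d) :=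
    fun j => P.input j with hg
  set K : Submodule ℂ (EuclideanSpace ℂ (Fin P.d)) := Submodule.span ℂ (Set.range g) with hK
  have hinK : ∀ i, P.avail x i → P.input i ∈ K := by
    intro i hi
    exact Submodule.subset_span ⟨⟨i, hi⟩, rfl⟩
  have htK : P.target ∉ K := by
    intro ht
    apply h
    rw [hK, Submodule.mem_span_range_iff_exists_fun] at ht
    obtain ⟨c, hc⟩ := ht
    refine ⟨fun i => if hi : P.avail x i then c ⟨i, hi⟩ else 0, ?_⟩
    have step : ∀ i : Fin P.m,
        (if P.avail x i then (if hi : P.avail x i then c ⟨i, hi⟩ else 0) else 0) • P.input i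
          = if hi : P.avail x i then c ⟨i, hi⟩ • g ⟨i, hi⟩ else 0 := by
      intro i; by_cases hi : P.avail x i <;> simp [hi, hg]
    rw [Finset.sum_congr rfl fun i _ => step i]
    rw [← Finset.sum_filter_of_ne (p := P.avail x)
      (fun i _ hne => by by_contra hi; simp [hi] at hne)]
    rw [Finset.sum_subtype (p := P.avail x) (Finset.univ.filter (P.avail x))
      (fun i => by simp) (fun i => if hi : P.avail x i then c ⟨i, hi⟩ • g ⟨i, hi⟩ else 0)]
    rw [← hc]
    exact Finset.sum_congr rfl fun j _ => by simp [j.2]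
  haveI : FiniteDimensional ℂ K := FiniteDimensional.span_of_finite ℂ (Set.finite_range g)
  set z : EuclideanSpace ℂ (Fin P.d) :=
    P.target - (K.starProjection P.target : EuclideanSpace ℂ (Fin P.d)) with hzdef
  have hzmem : z ∈ Kᗮ := Submodule.sub_starProjection_mem_orthogonal P.target
  have hKz : ∀ u ∈ K, ⟪u, z⟫ = 0 := (Submodule.mem_orthogonal K z).mp hzmem
  have hz0 : z ≠ 0 := by
    intro h0
    apply htK
    have : P.target = (K.starProjection P.target : EuclideanSpace ℂ (Fin P.d)) := by
      rw [← sub_eq_zero]; exact h0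
    rw [this]; exact K.starProjection_apply_mem _
  have htz : ⟪P.target, z⟫ = (‖z‖ : ℂ) ^ 2 := by
    have hsplit : (K.starProjection P.target : EuclideanSpace ℂ (Fin P.d)) + z
        = P.target := by rw [hzdef]; abel
    rw [← hsplit, inner_add_left, hKz _ (K.starProjection_apply_mem _), zero_add,
      inner_self_eq_norm_sq_to_K]
    norm_cast
  have htz0 : ⟪P.target, z⟫ ≠ 0 := by
    rw [htz]
    exact pow_ne_zero 2 (by exact_mod_cast norm_ne_zero_iff.mpr hz0)
  refine ⟨(⟪P.target, z⟫)⁻¹ • z, ?_, ?_⟩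
  · rw [inner_smul_right]
    exact inv_mul_cancel₀ htz0
  · intro i hi
    rw [inner_smul_right, hKz _ (hinK i hi), mul_zero]

end SpanProgram

namespace SpanProgram

noncomputable def Wfun {n : ℕ} (P : SpanProgram n) (x : Fin n → Bool) (w : Fin P.m → ℂ) :
    Fin (P.m + P.m) → ℂ :=
  Fin.addCases (fun i => (((if P.avail x i then w i else 0) : ℂ).re : ℂ))
    (fun i => (((if P.avail x i then w i else 0) : ℂ).im : ℂ))

@[simp] lemma Wfun_cast {n : ℕ} (P : SpanProgram n) (x : Fin n → Bool) (w : Fin P.m → ℂ)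
    (i : Fin P.m) :
    Wfun P x w (Fin.castAdd P.m i) = (((if P.avail x i then w i else 0) : ℂ).re : ℂ) :=
  Fin.addCases_left i

@[simp] lemma Wfun_nat {n : ℕ} (P : SpanProgram n) (x : Fin n → Bool) (w : Fin P.m → ℂ)
    (i : Fin P.m) :
    Wfun P x w (Fin.natAdd P.m i) = (((if P.avail x i then w i else 0) : ℂ).im : ℂ) :=
  Fin.addCases_right i

lemma Wfun_eval {n : ℕ} (P : SpanProgram n) (x : Fin n → Bool) (w : Fin P.m → ℂ)
    (hw : ∑ i, (if P.avail x i then w i else 0) • P.input i = P.target) :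
    (∑ i : Fin (P.m + P.m),
      (if P.realize.avail x i then Wfun P x w i else 0) • P.realize.input i) = rho P.target := by
  classical
  rw [Fin.sum_univ_add]
  simp only [Wfun_cast, Wfun_nat, realize_input_cast, realize_input_nat,
    realize_avail_cast, realize_avail_nat]
  have h1 : ∀ i : Fin P.m,
      (if P.avail x i then (((if P.avail x i then w i else 0) : ℂ).re : ℂ) else 0)
        = (((if P.avail x i then w i else 0) : ℂ).re : ℂ) := by
    intro i; by_cases h : P.avail x i <;> simp [h]
  have h2 : ∀ i : Fin P.m,
      (if P.avail x i then (((if P.avail x i then w i else 0) : ℂ).im : ℂ) else 0)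
        = (((if P.avail x i then w i else 0) : ℂ).im : ℂ) := by
    intro i; by_cases h : P.avail x i <;> simp [h]
  calc (∑ i, (if P.avail x i then (((if P.avail x i then w i else 0) : ℂ).re : ℂ) else 0)
          • rho (P.input i))
        + ∑ i, (if P.avail x i then (((if P.avail x i then w i else 0) : ℂ).im : ℂ) else 0)
          • rho (Complex.I • P.input i)
      = (∑ i, (((if P.avail x i then w i else 0) : ℂ).re : ℂ) • rho (P.input i))
        + ∑ i, (((if P.avail x i then w i else 0) : ℂ).im : ℂ)
          • rho (Complex.I • P.input i) :=
        congrArg₂ (· + ·)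
          (Finset.sum_congr rfl fun i _ => by rw [h1 i])
          (Finset.sum_congr rfl fun i _ => by rw [h2 i])
    _ = rho (∑ i, (if P.avail x i then w i else 0) • P.input i) := rho_sum_decomp _ _
    _ = rho P.target := by rw [hw]

lemma Wfun_cost_le {n : ℕ} (P : SpanProgram n) (s : Fin n → ℝ) (hs : ∀ j, 0 ≤ s j)
    (x : Fin n → Bool) (w : Fin P.m → ℂ) :
    (∑ i : Fin (P.m + P.m), P.realize.cw s i * ‖Wfun P x w i‖ ^ 2)
      ≤ ∑ i, P.cw s i * ‖w i‖ ^ 2 := by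
  rw [Fin.sum_univ_add]
  simp only [Wfun_cast, Wfun_nat, realize_cw_cast, realize_cw_nat, Complex.norm_real,
    Real.norm_eq_abs, sq_abs]
  rw [← Finset.sum_add_distrib]
  apply Finset.sum_le_sum
  intro i _
  have hcw := P.cw_nonneg hs i
  rw [← mul_add, ← complex_norm_sq]
  by_cases h : P.avail x i
  · simp [h]
  · simp [h]
    positivity

end SpanProgram

namespace SpanProgram

lemma realize_inner_cast {n : ℕ} (P : SpanProgram n) (i : Fin P.m)
    (w' : EuclideanSpace ℂ (Fin P.d)) :
    (⟪P.realize.input (Fin.castAdd P.m i),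
        (show EuclideanSpace ℂ (Fin P.realize.d) from rho w')⟫ : ℂ)
      = ((⟪P.input i, w'⟫ : ℂ).re : ℂ) := by
  rw [P.realize_input_cast i]
  exact inner_rho_rho _ _

lemma realize_inner_nat {n : ℕ} (P : SpanProgram n) (i : Fin P.m)
    (w' : EuclideanSpace ℂ (Fin P.d)) :
    (⟪P.realize.input (Fin.natAdd P.m i),
        (show EuclideanSpace ℂ (Fin P.realize.d) from rho w')⟫ : ℂ)
      = ((⟪P.input i, w'⟫ : ℂ).im : ℂ) := by
  rw [P.realize_input_nat i]
  exact inner_rho_I_rho _ _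

lemma realize_inner_target {n : ℕ} (P : SpanProgram n) (w' : EuclideanSpace ℂ (Fin P.d)) :
    (⟪P.realize.target, (show EuclideanSpace ℂ (Fin P.realize.d) from rho w')⟫ : ℂ)
      = ((⟪P.target, w'⟫ : ℂ).re : ℂ) :=
  inner_rho_rho _ _

end SpanProgram

/-- Every span program can be replaced by a real one, computing the same
function, without increasing the witness size on any input for any cost vector. -/
theorem spanProgram_real_exists (n : ℕ) (P : SpanProgram n) :
    ∃ P' : SpanProgram n,
      P'.IsReal ∧
      (∀ x : Fin n → Bool, (P'.eval x ↔ P.eval x)) ∧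
      ∀ (s : Fin n → ℝ), (∀ j, 0 ≤ s j) →
        ∀ x : Fin n → Bool, P'.wsizex s x ≤ P.wsizex s x := by
  classical
  refine ⟨P.realize, P.realize_isReal, P.realize_eval_iff, ?_⟩
  intro s hs x
  unfold SpanProgram.wsizex
  by_cases hev : P.eval x
  · rw [if_pos hev, if_pos ((P.realize_eval_iff x).mpr hev)]
    have hbdd : BddBelow { r : ℝ | ∃ w : Fin P.realize.m → ℂ,
        (∑ i, (if P.realize.avail x i then w i else 0) • P.realize.input i
          = P.realize.target) ∧
        r = ∑ i, P.realize.cw s i * ‖w i‖ ^ 2 } := by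
      refine ⟨0, ?_⟩
      rintro r ⟨w, -, rfl⟩
      exact Finset.sum_nonneg fun i _ =>
        mul_nonneg (P.realize.cw_nonneg hs i) (by positivity)
    apply le_csInf
    · obtain ⟨w, hw⟩ := hev
      exact ⟨_, w, hw, rfl⟩
    · rintro r ⟨w, hw, rfl⟩
      have hmem : (∑ i : Fin (P.m + P.m), P.realize.cw s i * ‖P.Wfun x w i‖ ^ 2) ∈
          { r : ℝ | ∃ w : Fin P.realize.m → ℂ,
            (∑ i, (if P.realize.avail x i then w i else 0) • P.realize.input i
              = P.realize.target) ∧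
            r = ∑ i, P.realize.cw s i * ‖w i‖ ^ 2 } :=
        ⟨P.Wfun x w, P.Wfun_eval x w hw, rfl⟩
      exact le_trans (csInf_le hbdd hmem) (P.Wfun_cost_le s hs x w)
  · have hev' : ¬ P.realize.eval x := fun h' => hev ((P.realize_eval_iff x).mp h')
    rw [if_neg hev, if_neg hev']
    have hbdd : BddBelow { r : ℝ | ∃ w' : EuclideanSpace ℂ (Fin P.realize.d),
        ⟪P.realize.target, w'⟫ = 1 ∧
        (∀ i, P.realize.avail x i → ⟪P.realize.input i, w'⟫ = 0) ∧
        r = ∑ i, P.realize.cw s i * ‖⟪P.realize.input i, w'⟫‖ ^ 2 } := by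
      refine ⟨0, ?_⟩
      rintro r ⟨w', -, -, rfl⟩
      exact Finset.sum_nonneg fun i _ =>
        mul_nonneg (P.realize.cw_nonneg hs i) (by positivity)
    apply le_csInf
    · obtain ⟨w', h1, h2⟩ := P.exists_neg_witness x hev
      exact ⟨_, w', h1, h2, rfl⟩
    · rintro r ⟨w', h1, h2, rfl⟩
      have hA : (⟪P.realize.target,
          (show EuclideanSpace ℂ (Fin P.realize.d) from rho w')⟫ : ℂ) = 1 := by
        rw [P.realize_inner_target, h1]
        simp
      have hB : ∀ i : Fin (P.m + P.m), P.realize.avail x i →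
          (⟪P.realize.input i,
            (show EuclideanSpace ℂ (Fin P.realize.d) from rho w')⟫ : ℂ) = 0 := by
        intro i hi
        induction i using Fin.addCases with
        | left i =>
          rw [P.realize_inner_cast, h2 i ((P.realize_avail_cast x i).mp hi)]
          simp
        | right i =>
          rw [P.realize_inner_nat, h2 i ((P.realize_avail_nat x i).mp hi)]
          simp
      have hC : (∑ i, P.cw s i * ‖⟪P.input i, w'⟫‖ ^ 2)
          = ∑ i : Fin (P.m + P.m),
            P.realize.cw s i * ‖(⟪P.realize.input i,
              (show EuclideanSpace ℂ (Fin P.realize.d) from rho w')⟫ : ℂ)‖ ^ 2 := by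
        rw [Fin.sum_univ_add]
        simp only [SpanProgram.realize_cw_cast, SpanProgram.realize_cw_nat,
          P.realize_inner_cast, P.realize_inner_nat, Complex.norm_real,
          Real.norm_eq_abs, sq_abs]
        rw [← Finset.sum_add_distrib]
        exact Finset.sum_congr rfl fun i _ => by rw [← mul_add, ← complex_norm_sq]
      exact csInf_le hbdd ⟨rho w', hA, hB, hC⟩
end
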